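/- Let 1 < p < ∞ and ε, λ', λ'' > 0, and set λ = λ'λ''/(λ' + λ'' + ε⁻¹). Let u ∈ W^{1,p}(U) for a bounded open U ⊂ ℝⁿ with u|_{U_ε} not identically zero, where U_ε = {x ∈ U : 0 < dist(x,∂U) < ε}, and let φ(x) = min(ε⁻¹ dist(x,∂U), 1). Suppose ‖∇(φu)‖_{L^p(U)} ≥ λ'‖φu‖_{L^p(U)} and ‖∇u‖_{L^p(U_ε)} ≥ λ''‖u‖_{L^p(U_ε)}. Then ‖∇u‖_{L^p(U)} ≥ λ‖u‖_{L^p(U)}. -/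

import Mathlib

open MeasureTheory

variable {α : Type*} [MeasurableSpace α] {μ : Measure α}

lemma memLp_of_integrable_rpow {p : ℝ} (hp : 1 ≤ p) {f : α → ℝ}
    (hm : AEStronglyMeasurable f μ) (hi : Integrable (fun x => |f x| ^ p) μ) :
    MemLp f (ENNReal.ofReal p) μ := by
  have hp0 : (0:ℝ) < p := lt_of_lt_of_le one_pos hp
  have hq0 : ENNReal.ofReal p ≠ 0 := by simp [ENNReal.ofReal_eq_zero, not_le, hp0]
  have hqt : ENNReal.ofReal p ≠ ⊤ := ENNReal.ofReal_ne_top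
  have hqr : (ENNReal.ofReal p).toReal = p := ENNReal.toReal_ofReal hp0.le
  have := (memLp_norm_rpow_iff (q := ENNReal.ofReal p) (p := ENNReal.ofReal p) hm hq0 hqt).mp
  rw [ENNReal.div_self hq0 hqt] at this
  apply this
  rw [memLp_one_iff_integrable]
  simpa [hqr, Real.norm_eq_abs] using hi

lemma lp_triangle {p : ℝ} (hp : 1 ≤ p) {f g : α → ℝ}
    (hfm : AEStronglyMeasurable f μ) (hgm : AEStronglyMeasurable g μ)
    (hf : Integrable (fun x => |f x| ^ p) μ) (hg : Integrable (fun x => |g x| ^ p) μ) :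
    (∫ x, |f x + g x| ^ p ∂μ) ^ (1/p) ≤
      (∫ x, |f x| ^ p ∂μ) ^ (1/p) + (∫ x, |g x| ^ p ∂μ) ^ (1/p) := by
  have hp0 : (0:ℝ) < p := lt_of_lt_of_le one_pos hp
  have hq0 : ENNReal.ofReal p ≠ 0 := by simp [ENNReal.ofReal_eq_zero, not_le, hp0]
  have hqt : ENNReal.ofReal p ≠ ⊤ := ENNReal.ofReal_ne_top
  have hqr : (ENNReal.ofReal p).toReal = p := ENNReal.toReal_ofReal hp0.le
  have hf' : MemLp f (ENNReal.ofReal p) μ := memLp_of_integrable_rpow hp hfm hf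
  have hg' : MemLp g (ENNReal.ofReal p) μ := memLp_of_integrable_rpow hp hgm hg
  have hfg : MemLp (f + g) (ENNReal.ofReal p) μ := hf'.add hg'
  have key := eLpNorm_add_le hfm hgm (ENNReal.one_le_ofReal.mpr hp)
  rw [hfg.eLpNorm_eq_integral_rpow_norm hq0 hqt,
      hf'.eLpNorm_eq_integral_rpow_norm hq0 hqt,
      hg'.eLpNorm_eq_integral_rpow_norm hq0 hqt, hqr,
      ← ENNReal.ofReal_add (by positivity) (by positivity)] at key
  have := (ENNReal.ofReal_le_ofReal_iff (by positivity)).mp key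
  simpa [Real.norm_eq_abs, one_div, Pi.add_apply] using this

set_option maxHeartbeats 1000000 in
theorem gromov_frequency_bound {n : ℕ} (p : ℝ) (hp : 1 < p)
    (U : Set (EuclideanSpace ℝ (Fin n))) (hU : IsOpen U)
    (hUb : Bornology.IsBounded U)
    (eps lam' lam'' : ℝ) (heps : 0 < eps) (hlam' : 0 < lam') (hlam'' : 0 < lam'')
    (u : EuclideanSpace ℝ (Fin n) → ℝ) (hu : Differentiable ℝ u)
    (hu1 : IntegrableOn (fun x => ‖fderiv ℝ u x‖ ^ p) U)
    (hu2 : IntegrableOn (fun x => |u x| ^ p) U)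
    (hune : ¬ ∀ x ∈ {x ∈ U | 0 < Metric.infDist x (frontier U) ∧
        Metric.infDist x (frontier U) < eps}, u x = 0)
    (hphi : lam' * (∫ x in U,
          |min (eps⁻¹ * Metric.infDist x (frontier U)) 1 * u x| ^ p) ^ (1 / p) ≤
        (∫ x in U, ‖fderiv ℝ (fun y =>
          min (eps⁻¹ * Metric.infDist y (frontier U)) 1 * u y) x‖ ^ p) ^ (1 / p))
    (hcollar : lam'' * (∫ x in {x ∈ U | 0 < Metric.infDist x (frontier U) ∧
          Metric.infDist x (frontier U) < eps}, |u x| ^ p) ^ (1 / p) ≤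
        (∫ x in {x ∈ U | 0 < Metric.infDist x (frontier U) ∧
          Metric.infDist x (frontier U) < eps}, ‖fderiv ℝ u x‖ ^ p) ^ (1 / p)) :
    lam' * lam'' / (lam' + lam'' + eps⁻¹) * (∫ x in U, |u x| ^ p) ^ (1 / p) ≤
      (∫ x in U, ‖fderiv ℝ u x‖ ^ p) ^ (1 / p) := by
  have hp1 : (1:ℝ) ≤ p := hp.le
  have hp0 : (0:ℝ) < p := lt_trans one_pos hp
  have hpne : p ≠ 0 := hp0.ne'
  have hie : (0:ℝ) < eps⁻¹ := inv_pos.mpr heps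
  set W : Set (EuclideanSpace ℝ (Fin n)) := {x ∈ U | 0 < Metric.infDist x (frontier U) ∧
      Metric.infDist x (frontier U) < eps} with hW
  set φ : EuclideanSpace ℝ (Fin n) → ℝ := fun x => min (eps⁻¹ * Metric.infDist x (frontier U)) 1 with hφ
  have hsub : W ⊆ U := fun x hx => hx.1
  have hWmeas : MeasurableSet W := by
    have hWeq : W = U ∩ (fun x => Metric.infDist x (frontier U)) ⁻¹' (Set.Ioo 0 eps) := rfl
    rw [hWeq]
    exact hU.measurableSet.inter
      ((Metric.continuous_infDist_pt (frontier U)).measurable measurableSet_Ioo)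
  -- the collar is nonempty, hence the frontier is nonempty
  push_neg at hune
  obtain ⟨x₀, hx₀W, -⟩ := hune
  have hfr : (frontier U).Nonempty := by
    by_contra h
    rw [Set.not_nonempty_iff_eq_empty] at h
    have := hx₀W.2.1
    rw [h, Metric.infDist_empty] at this
    exact lt_irrefl _ this
  have hdpos : ∀ x ∈ U, 0 < Metric.infDist x (frontier U) := by
    intro x hx
    rw [← (isClosed_frontier.notMem_iff_infDist_pos hfr)]
    intro hmem
    exact (hU.frontier_eq ▸ hmem).2 hx
  -- φ basic properties
  have hφ0 : ∀ x, 0 ≤ φ x := fun x => le_min (mul_nonneg hie.le Metric.infDist_nonneg) zero_le_one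
  have hφle1 : ∀ x, φ x ≤ 1 := fun x => min_le_right _ _
  have hφeq1 : ∀ x, eps ≤ Metric.infDist x (frontier U) → φ x = 1 := by
    intro x hx
    apply min_eq_right
    rw [← inv_mul_cancel₀ heps.ne']
    exact mul_le_mul_of_nonneg_left hx hie.le
  have hlipφ : LipschitzWith ‖eps⁻¹‖₊ φ := by
    have h1 : LipschitzWith (‖eps⁻¹‖₊ * 1) (fun x : EuclideanSpace ℝ (Fin n) => eps⁻¹ * Metric.infDist x (frontier U)) :=
      (lipschitzWith_smul (eps⁻¹ : ℝ)).comp (Metric.lipschitz_infDist_pt (frontier U))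
    simpa using h1.min_const 1
  have hφc : Continuous φ :=
    (continuous_const.mul (Metric.continuous_infDist_pt (frontier U))).min continuous_const
  -- abbreviations for the six norms
  set A := (∫ x in U, ‖fderiv ℝ u x‖ ^ p) ^ (1/p) with hA
  set B := (∫ x in U, |u x| ^ p) ^ (1/p) with hB
  set C := (∫ x in U, |φ x * u x| ^ p) ^ (1/p) with hC
  set D := (∫ x in U, ‖fderiv ℝ (fun y => φ y * u y) x‖ ^ p) ^ (1/p) with hD
  set Ee := (∫ x in W, |u x| ^ p) ^ (1/p) with hEe
  set Fq := (∫ x in W, ‖fderiv ℝ u x‖ ^ p) ^ (1/p) with hFq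
  have hphi' : lam' * C ≤ D := hphi
  have hcollar' : lam'' * Ee ≤ Fq := hcollar
  -- nonnegativity
  have hA0 : 0 ≤ A := Real.rpow_nonneg (integral_nonneg fun x => by positivity) _
  have hB0 : 0 ≤ B := Real.rpow_nonneg (integral_nonneg fun x => by positivity) _
  have hC0 : 0 ≤ C := Real.rpow_nonneg (integral_nonneg fun x => by positivity) _
  have hEe0 : 0 ≤ Ee := Real.rpow_nonneg (integral_nonneg fun x => by positivity) _
  -- indicator integral identity
  have hind_fun : (fun x => |Set.indicator W u x| ^ p) = Set.indicator W (fun x => |u x| ^ p) := by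
    funext x
    by_cases hx : x ∈ W
    · simp [Set.indicator_of_mem hx]
    · simp [Set.indicator_of_notMem hx, Real.zero_rpow hpne]
  have hres : (volume.restrict U).restrict W = volume.restrict W := by
    rw [Measure.restrict_restrict hWmeas, Set.inter_eq_self_of_subset_left hsub]
  have hind : (∫ x in U, |Set.indicator W u x| ^ p) = ∫ x in W, |u x| ^ p := by
    rw [hind_fun, integral_indicator hWmeas]
    rw [show (∫ x in W, |u x| ^ p ∂(volume.restrict U)) = ∫ x in W, |u x| ^ p ∂volume from by
      rw [← hres]]
  have hind_int : Integrable (fun x => |Set.indicator W u x| ^ p) (volume.restrict U) := by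
    rw [hind_fun]
    rw [integrable_indicator_iff hWmeas]
    rw [show IntegrableOn (fun x => |u x| ^ p) W (volume.restrict U) ↔
        IntegrableOn (fun x => |u x| ^ p) W volume from by rw [IntegrableOn, hres, IntegrableOn]]
    exact hu2.mono_set hsub
  -- measurability
  have humeas : Measurable u := hu.continuous.measurable
  have hindmeas : AEStronglyMeasurable (fun x => Set.indicator W u x) (volume.restrict U) :=
    (humeas.indicator hWmeas).aestronglyMeasurable
  -- Step 1 : B ≤ C + Ee
  have hBle : B ≤ C + Ee := by
    have hgm : AEStronglyMeasurable (fun x => (1 - φ x) * u x) (volume.restrict U) :=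
      ((continuous_const.sub hφc).mul hu.continuous).aestronglyMeasurable
    have hfm : AEStronglyMeasurable (fun x => φ x * u x) (volume.restrict U) :=
      (hφc.mul hu.continuous).aestronglyMeasurable
    have habs : ∀ x, |(1 - φ x) * u x| ≤ |u x| := by
      intro x
      rw [abs_mul]
      have h1 : |1 - φ x| ≤ 1 := by
        rw [abs_le]; constructor <;> nlinarith [hφ0 x, hφle1 x]
      nlinarith [abs_nonneg (u x)]
    have hg_int : Integrable (fun x => |(1 - φ x) * u x| ^ p) (volume.restrict U) := by
      apply Integrable.mono hu2 ((hgm.norm.aemeasurable.pow_const p).aestronglyMeasurable)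
      · filter_upwards with x
        simp only [Real.norm_eq_abs, abs_abs]
        rw [abs_of_nonneg (by positivity : (0:ℝ) ≤ |(1 - φ x) * u x| ^ p),
          abs_of_nonneg (by positivity : (0:ℝ) ≤ |u x| ^ p)]
        exact Real.rpow_le_rpow (abs_nonneg _) (habs x) hp0.le
    have hf_int : Integrable (fun x => |φ x * u x| ^ p) (volume.restrict U) := by
      apply Integrable.mono hu2 ((hfm.norm.aemeasurable.pow_const p).aestronglyMeasurable)
      · filter_upwards with x
        simp only [Real.norm_eq_abs, abs_abs]
        rw [abs_of_nonneg (by positivity : (0:ℝ) ≤ |φ x * u x| ^ p),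
          abs_of_nonneg (by positivity : (0:ℝ) ≤ |u x| ^ p)]
        apply Real.rpow_le_rpow (abs_nonneg _) ?_ hp0.le
        rw [abs_mul]
        nlinarith [abs_nonneg (u x), hφ0 x, hφle1 x, abs_of_nonneg (hφ0 x)]
    have tri := lp_triangle hp1 hfm hgm hf_int hg_int
    have heq : (fun x => |φ x * u x + (1 - φ x) * u x| ^ p) = fun x => |u x| ^ p := by
      funext x; ring_nf
    rw [heq] at tri
    refine le_trans tri (add_le_add_right ?_ C)
    -- (∫ |(1-φ)u|^p)^(1/p) ≤ Ee
    have hmono : (∫ x in U, |(1 - φ x) * u x| ^ p) ≤ ∫ x in U, |Set.indicator W u x| ^ p := by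
      apply integral_mono_of_nonneg (Filter.Eventually.of_forall fun x => by positivity) hind_int
      rw [Filter.EventuallyLE, ae_restrict_iff' hU.measurableSet]
      filter_upwards with x hxU
      apply Real.rpow_le_rpow (abs_nonneg _) ?_ hp0.le
      by_cases hxW : x ∈ W
      · rw [Set.indicator_of_mem hxW]
        exact habs x
      · rw [Set.indicator_of_notMem hxW]
        have hge : eps ≤ Metric.infDist x (frontier U) := by
          by_contra hlt
          exact hxW ⟨hxU, hdpos x hxU, not_le.mp hlt⟩
        rw [hφeq1 x hge]
        simp
    calc (∫ x in U, |(1 - φ x) * u x| ^ p) ^ (1/p)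
        ≤ (∫ x in U, |Set.indicator W u x| ^ p) ^ (1/p) :=
          Real.rpow_le_rpow (integral_nonneg fun x => by positivity) hmono (by positivity)
      _ = Ee := by rw [hind]
  -- Step 2 : Fq ≤ A
  have hFA : Fq ≤ A := by
    apply Real.rpow_le_rpow (integral_nonneg fun x => by positivity) ?_ (by positivity)
    exact setIntegral_mono_set hu1 (Filter.Eventually.of_forall fun x => by positivity)
      (Filter.Eventually.of_forall hsub)
  -- Step 3 : D ≤ A + eps⁻¹ * Ee
  have hDle : D ≤ A + eps⁻¹ * Ee := by
    set F1 : EuclideanSpace ℝ (Fin n) → ℝ := fun x => ‖fderiv ℝ u x‖ with hF1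
    set F2 : EuclideanSpace ℝ (Fin n) → ℝ := fun x => eps⁻¹ * |Set.indicator W u x| with hF2
    have hF1m : AEStronglyMeasurable F1 (volume.restrict U) :=
      (measurable_fderiv ℝ u).norm.aestronglyMeasurable
    have hF2m : AEStronglyMeasurable F2 (volume.restrict U) :=
      (measurable_const.mul (humeas.indicator hWmeas).abs).aestronglyMeasurable
    have hF1i : Integrable (fun x => |F1 x| ^ p) (volume.restrict U) := by
      simpa [hF1, abs_norm, IntegrableOn] using hu1
    have hF2i : Integrable (fun x => |F2 x| ^ p) (volume.restrict U) := by
      have : (fun x => |F2 x| ^ p) = fun x => eps⁻¹ ^ p * |Set.indicator W u x| ^ p := by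
        funext x
        rw [hF2, abs_of_nonneg (by positivity), Real.mul_rpow hie.le (abs_nonneg _)]
      rw [this]
      exact hind_int.const_mul _
    -- pointwise bound on the derivative of φ * u
    have hq0 : ENNReal.ofReal p ≠ 0 := by simp [ENNReal.ofReal_eq_zero, not_le, hp0]
    have hqt : ENNReal.ofReal p ≠ ⊤ := ENNReal.ofReal_ne_top
    have hqr : (ENNReal.ofReal p).toReal = p := ENNReal.toReal_ofReal hp0.le
    have hsum_mem : MemLp (F1 + F2) (ENNReal.ofReal p) (volume.restrict U) :=
      (memLp_of_integrable_rpow hp1 hF1m hF1i).add (memLp_of_integrable_rpow hp1 hF2m hF2i)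
    have hsum_int : Integrable (fun x => |F1 x + F2 x| ^ p) (volume.restrict U) := by
      have := hsum_mem.integrable_norm_rpow hq0 hqt
      simpa [hqr, Real.norm_eq_abs] using this
    have hrad : ∀ᵐ x ∂(volume.restrict U), DifferentiableAt ℝ φ x :=
      ae_restrict_of_ae (hlipφ.ae_differentiableAt)
    have hDint : (∫ x in U, ‖fderiv ℝ (fun y => φ y * u y) x‖ ^ p)
        ≤ ∫ x in U, |F1 x + F2 x| ^ p := by
      apply integral_mono_of_nonneg (Filter.Eventually.of_forall fun x => by positivity) hsum_int
      have hmemU : ∀ᵐ x ∂(volume.restrict U), x ∈ U := ae_restrict_mem hU.measurableSet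
      filter_upwards [hrad, hmemU] with x hdiff hxU
      have hF1x : 0 ≤ F1 x := norm_nonneg _
      have hF2x : 0 ≤ F2 x := by rw [hF2]; positivity
      apply Real.rpow_le_rpow (norm_nonneg _) ?_ hp0.le
      refine le_trans ?_ (le_abs_self _)
      rw [fderiv_fun_mul hdiff (hu x)]
      refine le_trans (norm_add_le _ _) ?_
      rw [norm_smul, norm_smul, Real.norm_eq_abs, Real.norm_eq_abs]
      by_cases hlt : Metric.infDist x (frontier U) < eps
      · have hxW : x ∈ W := ⟨hxU, hdpos x hxU, hlt⟩
        have h1 : ‖fderiv ℝ φ x‖ ≤ eps⁻¹ := by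
          have := norm_fderiv_le_of_lipschitz ℝ hlipφ (x₀ := x)
          rwa [coe_nnnorm, Real.norm_eq_abs, abs_of_nonneg hie.le] at this
        have h2 : |φ x| ≤ 1 := by rw [abs_of_nonneg (hφ0 x)]; exact hφle1 x
        have h3 : F2 x = eps⁻¹ * |u x| := by simp only [hF2, Set.indicator_of_mem hxW]
        rw [h3]
        have := mul_le_mul_of_nonneg_left h1 (abs_nonneg (u x))
        nlinarith [norm_nonneg (fderiv ℝ u x), abs_nonneg (u x)]
      · have hxW : x ∉ W := fun hmem => hlt hmem.2.2
        have hmax : IsLocalMax φ x := by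
          apply Filter.Eventually.of_forall
          intro y
          rw [hφeq1 x (not_lt.mp hlt)]
          exact hφle1 y
        rw [hmax.fderiv_eq_zero]
        have h3 : F2 x = 0 := by simp [hF2, Set.indicator_of_notMem hxW]
        rw [h3]
        have h2 : |φ x| ≤ 1 := by rw [abs_of_nonneg (hφ0 x)]; exact hφle1 x
        simp only [norm_zero, mul_zero, add_zero]
        nlinarith [norm_nonneg (fderiv ℝ u x)]
    have tri := lp_triangle hp1 hF1m hF2m hF1i hF2i
    have hInt2 : (∫ x in U, |F2 x| ^ p) ^ (1/p) = eps⁻¹ * Ee := by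
      have h1 : (fun x => |F2 x| ^ p) = fun x => eps⁻¹ ^ p * |Set.indicator W u x| ^ p := by
        funext x
        rw [hF2, abs_of_nonneg (by positivity), Real.mul_rpow hie.le (abs_nonneg _)]
      rw [h1, integral_const_mul, hind, Real.mul_rpow (by positivity)
        (integral_nonneg fun x => by positivity), ← Real.rpow_mul hie.le,
        mul_one_div_cancel hpne, Real.rpow_one, hEe]
    have hInt1 : (∫ x in U, |F1 x| ^ p) ^ (1/p) = A := by
      rw [hA]; congr 1; congr 1; funext x; rw [hF1, abs_norm]
    calc D ≤ (∫ x in U, |F1 x + F2 x| ^ p) ^ (1/p) :=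
          Real.rpow_le_rpow (integral_nonneg fun x => by positivity) hDint (by positivity)
      _ ≤ (∫ x in U, |F1 x| ^ p) ^ (1/p) + (∫ x in U, |F2 x| ^ p) ^ (1/p) := tri
      _ = A + eps⁻¹ * Ee := by rw [hInt1, hInt2]
  -- final arithmetic
  have hs : 0 < lam' + lam'' + eps⁻¹ := by positivity
  rw [div_mul_eq_mul_div, div_le_iff₀ hs]
  have k1 := mul_le_mul_of_nonneg_left hBle (by positivity : (0:ℝ) ≤ lam' * lam'')
  have k2 := mul_le_mul_of_nonneg_left hphi' hlam''.le
  have k3 := mul_le_mul_of_nonneg_left hDle hlam''.le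
  have k4 := mul_le_mul_of_nonneg_left hcollar' hie.le
  have k5 := mul_le_mul_of_nonneg_left hcollar' hlam'.le
  have k6 := mul_le_mul_of_nonneg_left hFA hie.le
  have k7 := mul_le_mul_of_nonneg_left hFA hlam'.le
  nlinarith [k1, k2, k3, k4, k5, k6, k7]
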